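/- Fix a function h : ℝ → ℝ such that its derivative h' is differentiable with derivative h''. Then for every A > 0 and every (x, y) ∈ ℝ², the lifted eggbeater map G_A is differentiable at (x, y), its derivative is the linear map with matrix M = [[1, A·h''(y)], [−2A·h''(x̃), 1 − 2A²·h''(x̃)·h''(y)]] where x̃ = x + A·h'(y); moreover det(M) = 1 and det(M − I) = 2A²·h''(x̃)·h''(y). In particular, if G_A(x, y) = (x, y) + (m, n) for some integers m, n and h''(x̃) ≠ 0 and h''(y) ≠ 0, then 1 is not an eigenvalue of the derivative of G_A at (x, y), i.e. the corresponding fixed point of the induced torus map is non-degenerate. -/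

import Mathlib

/-- The lifted flow `Φ_A (x, y) = (x + A·h'(y), y)`. -/
noncomputable def PhiLift (h : ℝ → ℝ) (A : ℝ) : ℝ × ℝ → ℝ × ℝ :=
  fun p => (p.1 + A * deriv h p.2, p.2)

/-- The lifted flow `Ψ_{2A} (x, y) = (x, y − 2A·h'(x))`. -/
noncomputable def PsiLift (h : ℝ → ℝ) (A : ℝ) : ℝ × ℝ → ℝ × ℝ :=
  fun p => (p.1, p.2 - 2 * A * deriv h p.1)

/-- The lifted eggbeater map `G_A = Ψ_{2A} ∘ Φ_A`, explicitly
`G_A (x, y) = (x + A·h'(y), y − 2A·h'(x + A·h'(y)))`. -/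
noncomputable def EggbeaterLift (h : ℝ → ℝ) (A : ℝ) : ℝ × ℝ → ℝ × ℝ :=
  PsiLift h A ∘ PhiLift h A

/-- The Jacobian matrix `M = [[1, A·h''(y)], [−2A·h''(x̃), 1 − 2A²·h''(x̃)·h''(y)]]`
of the lifted eggbeater map at `(x, y)`, where `x̃ = x + A·h'(y)` and
`h'' = deriv (deriv h)`. -/
noncomputable def EggbeaterJacobian (h : ℝ → ℝ) (A : ℝ) (x y : ℝ) :
    Matrix (Fin 2) (Fin 2) ℝ :=
  !![1, A * deriv (deriv h) y;
     -(2 * A) * deriv (deriv h) (x + A * deriv h y),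
     1 - 2 * A ^ 2 * deriv (deriv h) (x + A * deriv h y) * deriv (deriv h) y]

/-- Let `h : ℝ → ℝ` have a differentiable derivative `h'` (with
derivative `h''`).  For every `A > 0` and every `(x, y) ∈ ℝ²`, the lifted
eggbeater map `G_A` is differentiable at `(x, y)` with derivative the linear map
with matrix `M = EggbeaterJacobian h A x y`; moreover `det M = 1` and
`det (M − I) = 2A²·h''(x̃)·h''(y)` where `x̃ = x + A·h'(y)`.  In particular, if
`G_A (x, y) = (x, y) + (m, n)` for some integers `m, n` and `h''(x̃) ≠ 0`,
`h''(y) ≠ 0`, then `1` is not an eigenvalue of the derivative of `G_A` at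
`(x, y)`, i.e. the corresponding fixed point of the induced torus map is
non-degenerate. -/
theorem eggbeater_fixed_points_nondegenerate
    (h : ℝ → ℝ) (hd1 : Differentiable ℝ h) (hd2 : Differentiable ℝ (deriv h))
    (A : ℝ) (hA : 0 < A) (x y : ℝ) :
    ∃ L : ℝ × ℝ →L[ℝ] ℝ × ℝ,
      HasFDerivAt (EggbeaterLift h A) L (x, y) ∧
      (∀ v : ℝ × ℝ,
        L v = (EggbeaterJacobian h A x y 0 0 * v.1 + EggbeaterJacobian h A x y 0 1 * v.2,
               EggbeaterJacobian h A x y 1 0 * v.1 + EggbeaterJacobian h A x y 1 1 * v.2)) ∧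
      (EggbeaterJacobian h A x y).det = 1 ∧
      (EggbeaterJacobian h A x y - 1).det =
        2 * A ^ 2 * deriv (deriv h) (x + A * deriv h y) * deriv (deriv h) y ∧
      ((∃ m n : ℤ, EggbeaterLift h A (x, y) = (x + (m : ℝ), y + (n : ℝ))) →
        deriv (deriv h) (x + A * deriv h y) ≠ 0 → deriv (deriv h) y ≠ 0 →
        ∀ v : ℝ × ℝ, L v = v → v = 0) := by

  classical
  set a := deriv (deriv h) y with ha
  set b := deriv (deriv h) (x + A * deriv h y) with hb
  set F := ContinuousLinearMap.fst ℝ ℝ ℝ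
  set S := ContinuousLinearMap.snd ℝ ℝ ℝ
  set L1 : ℝ × ℝ →L[ℝ] ℝ := F + (A * a) • S with hL1
  set L : ℝ × ℝ →L[ℝ] ℝ × ℝ := L1.prod (S - (2 * A * b) • L1) with hL
  have hLv : ∀ v : ℝ × ℝ,
      L v = (v.1 + A * a * v.2, v.2 - 2 * A * b * (v.1 + A * a * v.2)) := by
    intro v
    simp [hL, hL1, F, S, ContinuousLinearMap.prod_apply, smul_eq_mul]
    ring
  refine ⟨L, ?_, ?_, ?_, ?_, ?_⟩
  · have h1 : HasFDerivAt (fun p : ℝ × ℝ => p.1 + A * deriv h p.2) L1 (x, y) := by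
      have hc : HasFDerivAt (fun p : ℝ × ℝ => deriv h p.2) (a • S) (x, y) := by
        have := (hd2 y).hasDerivAt.comp_hasFDerivAt (x, y) (hasFDerivAt_snd (𝕜 := ℝ) (p := (x, y)))
        exact this
      have := hasFDerivAt_fst.add (hc.const_mul A)
      simp [hL1, smul_smul, F, S] at this
      exact this
    have hg : HasFDerivAt (fun p : ℝ × ℝ => deriv h (p.1 + A * deriv h p.2))
        (b • L1) (x, y) := by
      have := (hd2 (x + A * deriv h y)).hasDerivAt.comp_hasFDerivAt (x, y) h1
      exact this
    have h2 := hasFDerivAt_snd.sub (hg.const_mul (2 * A))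
    have h3 := HasFDerivAt.prodMk h1 h2
    have heq : EggbeaterLift h A = fun p : ℝ × ℝ =>
        ((p.1 + A * deriv h p.2 : ℝ), (p.2 - 2 * A * deriv h (p.1 + A * deriv h p.2) : ℝ)) := by
      funext p
      simp [EggbeaterLift, PsiLift, PhiLift, Function.comp]
    rw [heq, hL]
    rw [smul_smul] at h3
    exact h3
  · intro v; rw [hLv v]
    simp [EggbeaterJacobian, ← ha, ← hb]
    ring_nf
  · simp [EggbeaterJacobian, Matrix.det_fin_two, ← ha, ← hb]; ring
  · simp [EggbeaterJacobian, Matrix.det_fin_two, Matrix.sub_apply, Matrix.one_apply, ← ha, ← hb]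
    ring
  · intro _ hbne hane v hv
    rw [hLv v] at hv
    have e1 : v.1 + A * a * v.2 = v.1 := congrArg Prod.fst hv
    have e2 : v.2 - 2 * A * b * (v.1 + A * a * v.2) = v.2 := congrArg Prod.snd hv
    have h1 : A * a * v.2 = 0 := by linarith
    have hv2 : v.2 = 0 := by
      have hAa : A * a ≠ 0 := mul_ne_zero (ne_of_gt hA) hane
      exact (mul_eq_zero.1 h1).resolve_left hAa
    rw [e1] at e2
    have h2 : 2 * A * b * v.1 = 0 := by linarith
    have hv1 : v.1 = 0 := by
      have : (2 * A * b) ≠ 0 := by positivity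
      exact (mul_eq_zero.1 h2).resolve_left this
    exact Prod.ext hv1 hv2
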